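/- Let p < q be two distinct primes and let n = p^{e_1}·q^{e_2} with e_1, e_2 ≥ 1. Let f(x) ∈ ℚ[x] with deg f(x) < n be divisible by Φ_n(x). Then there exists exactly one pair (h_{n/p}(x), h_{n/q}(x)) of polynomials in ℚ[x] with deg h_{n/p} < n/p and deg h_{n/q} < n/q such that f(x) = h_{n/p}(x)·G(n,n/p;x) + h_{n/q}(x)·G(n,n/q;x) and the decomposition is p-uniformized. -/

import Mathlib

open Polynomial

/-- The fundamental `r`-recurrent polynomial with respect to `n`:
`G(n,r;x) = 1 + x^r + x^{2r} + ⋯ + x^{n-r} = (x^n - 1)/(x^r - 1)`. -/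
noncomputable def Gpoly (R : Type*) [Semiring R] (n r : ℕ) : Polynomial R :=
  ∑ l ∈ Finset.range (n / r), X ^ (l * r)

/-- A decomposition with first multiplicator `h` (of degree `< n/p`) is `p`-uniformized if,
writing `h = Σ b_u x^u` and grouping `B_s = {b_{l·n/(pq)+s} : l = 0,…,q-1}` for each
`s = 0,…,n/(pq)-1`, we have `min B_s = 0`, i.e. `0` belongs to `B_s` and bounds it below. -/
def PUniformized (n p q : ℕ) (h : Polynomial ℚ) : Prop :=
  ∀ s < n / (p * q),
    (∃ l < q, h.coeff (l * (n / (p * q)) + s) = 0) ∧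
    (∀ l < q, 0 ≤ h.coeff (l * (n / (p * q)) + s))

section Aux

open Finset

lemma geom_aux {R : Type*} [CommRing R] (k r : ℕ) :
    ((X : R[X]) ^ r - 1) * (∑ l ∈ Finset.range k, (X : R[X]) ^ (l * r)) = X ^ (k * r) - 1 := by
  have h : ∀ l, (X : R[X]) ^ (l * r) = (X ^ r) ^ l := fun l => by
    rw [← pow_mul, mul_comm]
  simp_rw [h]
  rw [mul_geom_sum, ← pow_mul, mul_comm r k]

lemma Gpoly_mul {R : Type*} [CommRing R] {n r : ℕ} (h : r ∣ n) :
    ((X : R[X]) ^ r - 1) * Gpoly R n r = X ^ n - 1 := by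
  rw [Gpoly, geom_aux, Nat.div_mul_cancel h]

lemma X_pow_sub_one_ne' {n : ℕ} (hn : 0 < n) : ((X : ℚ[X]) ^ n - 1) ≠ 0 := by
  simpa using X_pow_sub_C_ne_zero hn (1 : ℚ)

lemma Gpoly_eq_prod_cyclotomic {n r : ℕ} (hr : 0 < r) (hrn : r ∣ n) (hn : 0 < n) :
    Gpoly ℚ n r = ∏ d ∈ n.divisors \ r.divisors, cyclotomic d ℚ := by
  apply mul_left_cancel₀ (X_pow_sub_one_ne' hr)
  rw [Gpoly_mul hrn, ← prod_cyclotomic_eq_X_pow_sub_one hr ℚ,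
    ← prod_cyclotomic_eq_X_pow_sub_one hn ℚ,
    ← Finset.prod_sdiff (Nat.divisors_subset_of_dvd hn.ne' hrn), mul_comm]

lemma coeff_sumXpow (k r t : ℕ) (hr : 0 < r) :
    (∑ l ∈ Finset.range k, (X : ℚ[X]) ^ (l * r)).coeff (t * r) = if t < k then 1 else 0 := by
  rw [finset_sum_coeff]
  have h : ∀ l ∈ Finset.range k,
      ((X : ℚ[X]) ^ (l * r)).coeff (t * r) = if l = t then 1 else 0 := by
    intro l _
    rw [coeff_X_pow]
    congr 1
    simp only [eq_iff_iff]
    constructor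
    · intro h; exact Nat.eq_of_mul_eq_mul_right hr h.symm
    · intro h; rw [h]
  rw [Finset.sum_congr rfl h, Finset.sum_ite_eq' (Finset.range k) t (fun _ => (1:ℚ))]
  simp [Finset.mem_range]

lemma degree_sumXpow_le (k r : ℕ) :
    (∑ l ∈ Finset.range k, (X : ℚ[X]) ^ (l * r)).degree ≤ (((k-1) * r : ℕ) : WithBot ℕ) := by
  refine (degree_sum_le _ _).trans ?_
  apply Finset.sup_le
  intro l hl
  rw [Finset.mem_range] at hl
  refine (degree_X_pow_le _).trans ?_
  exact_mod_cast Nat.mul_le_mul_right r (by omega : l ≤ k - 1)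

lemma coeff_mul_sumXpow {c : ℚ[X]} {m k : ℕ} (hc : c.degree < (m : WithBot ℕ))
    {l s : ℕ} (hl : l < k) (hs : s < m) :
    (c * ∑ l' ∈ Finset.range k, (X : ℚ[X]) ^ (l' * m)).coeff (l * m + s) = c.coeff s := by
  rw [Finset.mul_sum, finset_sum_coeff]
  have h : ∀ l' ∈ Finset.range k,
      (c * (X : ℚ[X]) ^ (l' * m)).coeff (l * m + s) = if l' = l then c.coeff s else 0 := by
    intro l' _
    rw [coeff_mul_X_pow']
    rcases lt_trichotomy l' l with h1 | h1 | h1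
    · rw [if_pos, if_neg (by omega)]
      · have hml : l' * m + m ≤ l * m := by
          calc l' * m + m = (l' + 1) * m := by ring
          _ ≤ l * m := Nat.mul_le_mul_right m (by omega)
        apply coeff_eq_zero_of_degree_lt
        refine lt_of_lt_of_le hc ?_
        exact_mod_cast (by omega : m ≤ l * m + s - l' * m)
      · exact le_trans (Nat.mul_le_mul_right m (le_of_lt h1)) (Nat.le_add_right _ _)
    · subst h1; rw [if_pos (Nat.le_add_right _ _), if_pos rfl, Nat.add_sub_cancel_left]
    · have hlt : l * m + s < l' * m := by
        calc l * m + s < (l + 1) * m := by rw [add_one_mul]; omega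
        _ ≤ l' * m := Nat.mul_le_mul_right m (by omega)
      rw [if_neg (by omega), if_neg (by omega)]
  rw [Finset.sum_congr rfl h, Finset.sum_ite_eq' (Finset.range k) l (fun _ => c.coeff s)]
  simp [Finset.mem_range, hl]

lemma coeff_sumC (m : ℕ) (g : ℕ → ℚ) (j : ℕ) :
    (∑ s ∈ Finset.range m, C (g s) * X ^ s).coeff j = if j < m then g j else 0 := by
  rw [finset_sum_coeff]
  simp_rw [coeff_C_mul, coeff_X_pow, mul_ite, mul_one, mul_zero]
  rw [Finset.sum_ite_eq (Finset.range m) j g]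
  simp [Finset.mem_range]

lemma degree_mul_lt_helper {c P : ℚ[X]} {k j : ℕ} (hc : c.degree < (k : WithBot ℕ))
    (hP : P.degree ≤ (j : WithBot ℕ)) :
    (c * P).degree < ((k + j : ℕ) : WithBot ℕ) := by
  rw [degree_lt_iff_coeff_zero] at hc ⊢
  intro t ht
  rw [coeff_mul]
  apply Finset.sum_eq_zero
  intro x hx
  rw [Finset.HasAntidiagonal.mem_antidiagonal] at hx
  by_cases h : k ≤ x.1
  · rw [hc _ h, zero_mul]
  · have hj : j < x.2 := by omega
    rw [coeff_eq_zero_of_degree_lt (lt_of_le_of_lt hP (by exact_mod_cast hj)), mul_zero]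

lemma primepow_dvd_of_not_dvd_div {p n d : ℕ} (hp : p.Prime) (hn : n ≠ 0)
    (hpn : p ∣ n) (hd : d ∣ n) (h : ¬ d ∣ n / p) : p ^ (n.factorization p) ∣ d := by
  have hd0 : d ≠ 0 := fun h0 => hn (by simpa [h0] using hd)
  have hnp0 : n / p ≠ 0 := (Nat.div_pos (Nat.le_of_dvd (Nat.pos_of_ne_zero hn) hpn) hp.pos).ne'
  by_contra h'
  apply h
  rw [← Nat.factorization_le_iff_dvd hd0 hnp0, Nat.factorization_div hpn, hp.factorization]
  rw [Nat.Prime.pow_dvd_iff_le_factorization hp hd0, not_le] at h'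
  rw [Finsupp.le_def]
  intro r
  rw [Finsupp.tsub_apply]
  have hdn : d.factorization r ≤ n.factorization r :=
    (Nat.factorization_le_iff_dvd hd0 hn).mpr hd r
  rcases eq_or_ne r p with rfl | hrp
  · simp only [Finsupp.single_eq_same]; omega
  · rw [Finsupp.single_eq_of_ne' (Ne.symm hrp)]; omega

lemma fact_p_eq {p q e₁ e₂ : ℕ} (hp : p.Prime) (hq : q.Prime) (hne : p ≠ q) :
    (p ^ e₁ * q ^ e₂).factorization p = e₁ := by
  rw [Nat.factorization_mul (pow_ne_zero _ hp.pos.ne') (pow_ne_zero _ hq.pos.ne'),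
    Finsupp.add_apply, hp.factorization_pow, hq.factorization_pow,
    Finsupp.single_eq_same, Finsupp.single_eq_of_ne' (Ne.symm hne), add_zero]

lemma eq_of_not_dvd_divs {p q e₁ e₂ n d : ℕ} (hp : p.Prime) (hq : q.Prime) (hne : p ≠ q)
    (he₁ : 1 ≤ e₁) (he₂ : 1 ≤ e₂)
    (hn : n = p ^ e₁ * q ^ e₂) (hd : d ∣ n) (h1 : ¬ d ∣ n / p) (h2 : ¬ d ∣ n / q) :
    d = n := by
  have hn0 : n ≠ 0 := by
    rw [hn]; exact Nat.mul_ne_zero (pow_ne_zero _ hp.pos.ne') (pow_ne_zero _ hq.pos.ne')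
  have hfp : n.factorization p = e₁ := by rw [hn]; exact fact_p_eq hp hq hne
  have hfq : n.factorization q = e₂ := by
    rw [hn, mul_comm]; exact fact_p_eq hq hp (Ne.symm hne)
  have hpn : p ∣ n := by
    rw [hn]; exact dvd_mul_of_dvd_left (dvd_pow_self p (by omega)) _
  have hqn : q ∣ n := by
    rw [hn]; exact dvd_mul_of_dvd_right (dvd_pow_self q (by omega)) _
  have h1' := primepow_dvd_of_not_dvd_div hp hn0 hpn hd h1
  have h2' := primepow_dvd_of_not_dvd_div hq hn0 hqn hd h2
  rw [hfp] at h1'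
  rw [hfq] at h2'
  have hco : Nat.Coprime (p ^ e₁) (q ^ e₂) :=
    Nat.Coprime.pow e₁ e₂ ((Nat.coprime_primes hp hq).mpr hne)
  exact Nat.dvd_antisymm hd (hn ▸ hco.mul_dvd_of_dvd_of_dvd h1' h2')

lemma nat_aux (m k : ℕ) (hk : 0 < k) : m + (k - 1) * m = k * m := by
  conv_rhs => rw [← Nat.succ_pred_eq_of_pos hk, Nat.succ_mul]
  exact Nat.add_comm _ _

end Aux

theorem stmt_12 (p q e₁ e₂ n : ℕ) (hp : p.Prime) (hq : q.Prime) (hpq : p < q)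
    (he₁ : 1 ≤ e₁) (he₂ : 1 ≤ e₂) (hn : n = p ^ e₁ * q ^ e₂)
    (f : Polynomial ℚ) (hdeg : f.degree < (n : WithBot ℕ))
    (hdvd : cyclotomic n ℚ ∣ f) :
    ∃! hh : Polynomial ℚ × Polynomial ℚ,
      hh.1.degree < ((n / p : ℕ) : WithBot ℕ) ∧
      hh.2.degree < ((n / q : ℕ) : WithBot ℕ) ∧
      f = hh.1 * Gpoly ℚ n (n / p) + hh.2 * Gpoly ℚ n (n / q) ∧
      PUniformized n p q hh.1 := by
  have hpq' : p ≠ q := Nat.ne_of_lt hpq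
  obtain ⟨a0, rfl⟩ : ∃ a0, e₁ = a0 + 1 := ⟨e₁ - 1, by omega⟩
  obtain ⟨b0, rfl⟩ : ∃ b0, e₂ = b0 + 1 := ⟨e₂ - 1, by omega⟩
  have hp0 := hp.pos
  have hq0 := hq.pos
  set m := p ^ a0 * q ^ b0 with hm_def
  have hm0 : 0 < m := Nat.mul_pos (pow_pos hp0 _) (pow_pos hq0 _)
  have hn0 : 0 < n := by rw [hn]; exact Nat.mul_pos (pow_pos hp0 _) (pow_pos hq0 _)
  have hnp_eq : n / p = m * q := by
    have h : n = (m * q) * p := by rw [hn, hm_def]; ring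
    rw [h, Nat.mul_div_cancel _ hp0]
  have hnq_eq : n / q = m * p := by
    have h : n = (m * p) * q := by rw [hn, hm_def]; ring
    rw [h, Nat.mul_div_cancel _ hq0]
  have hmpq : n / (p * q) = m := by
    have h : n = m * (p * q) := by rw [hn, hm_def]; ring
    rw [h, Nat.mul_div_cancel _ (Nat.mul_pos hp0 hq0)]
  have hnp0 : 0 < n / p := by rw [hnp_eq]; exact Nat.mul_pos hm0 hq0
  have hnq0 : 0 < n / q := by rw [hnq_eq]; exact Nat.mul_pos hm0 hp0
  have hpdvd : p ∣ n := ⟨m * q, by rw [hn, hm_def]; ring⟩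
  have hqdvd : q ∣ n := ⟨m * p, by rw [hn, hm_def]; ring⟩
  have hnpdvd : n / p ∣ n := Nat.div_dvd_of_dvd hpdvd
  have hnqdvd : n / q ∣ n := Nat.div_dvd_of_dvd hqdvd
  have hmnp : m ∣ n / p := ⟨q, hnp_eq⟩
  have hmnq : m ∣ n / q := ⟨p, hnq_eq⟩
  have hnnp : n / (n / p) = p := by
    have h : n = p * (m * q) := by rw [hn, hm_def]; ring
    rw [hnp_eq, h, Nat.mul_div_cancel _ (Nat.mul_pos hm0 hq0)]
  have hnnq : n / (n / q) = q := by
    have h : n = q * (m * p) := by rw [hn, hm_def]; ring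
    rw [hnq_eq, h, Nat.mul_div_cancel _ (Nat.mul_pos hm0 hp0)]
  have hnpm : (n / p) / m = q := by rw [hnp_eq, mul_comm, Nat.mul_div_cancel _ hm0]
  have hnqm : (n / q) / m = p := by rw [hnq_eq, mul_comm, Nat.mul_div_cancel _ hm0]
  set Gp := Gpoly ℚ n (n / p) with hGp_def
  set Gq := Gpoly ℚ n (n / q) with hGq_def
  set Pp := Gpoly ℚ (n / p) m with hPp_def
  set Qq := Gpoly ℚ (n / q) m with hQq_def
  have hGpsum : Gp = ∑ l ∈ Finset.range p, (X : ℚ[X]) ^ (l * (n / p)) := by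
    rw [hGp_def, Gpoly, hnnp]
  have hGqsum : Gq = ∑ l ∈ Finset.range q, (X : ℚ[X]) ^ (l * (n / q)) := by
    rw [hGq_def, Gpoly, hnnq]
  have hPpsum : Pp = ∑ l ∈ Finset.range q, (X : ℚ[X]) ^ (l * m) := by
    rw [hPp_def, Gpoly, hnpm]
  have hQqsum : Qq = ∑ l ∈ Finset.range p, (X : ℚ[X]) ^ (l * m) := by
    rw [hQq_def, Gpoly, hnqm]
  have hMpGp : ((X : ℚ[X]) ^ (n/p) - 1) * Gp = X ^ n - 1 := Gpoly_mul hnpdvd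
  have hMqGq : ((X : ℚ[X]) ^ (n/q) - 1) * Gq = X ^ n - 1 := Gpoly_mul hnqdvd
  have hPmul : ((X : ℚ[X]) ^ m - 1) * Pp = X ^ (n/p) - 1 := Gpoly_mul hmnp
  have hQmul : ((X : ℚ[X]) ^ m - 1) * Qq = X ^ (n/q) - 1 := Gpoly_mul hmnq
  have hPGQG : Pp * Gp = Qq * Gq := by
    apply mul_left_cancel₀ (X_pow_sub_one_ne' hm0)
    calc ((X : ℚ[X]) ^ m - 1) * (Pp * Gp) = (((X : ℚ[X]) ^ m - 1) * Pp) * Gp := by ring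
      _ = ((X : ℚ[X]) ^ (n/p) - 1) * Gp := by rw [hPmul]
      _ = (X : ℚ[X]) ^ n - 1 := hMpGp
      _ = ((X : ℚ[X]) ^ (n/q) - 1) * Gq := hMqGq.symm
      _ = (((X : ℚ[X]) ^ m - 1) * Qq) * Gq := by rw [hQmul]
      _ = ((X : ℚ[X]) ^ m - 1) * (Qq * Gq) := by ring
  have hGq0 : Gq ≠ 0 := fun h => X_pow_sub_one_ne' hn0 (by rw [← hMqGq, h, mul_zero])
  have hPp0 : Pp ≠ 0 := fun h => X_pow_sub_one_ne' hnp0 (by rw [← hPmul, h, mul_zero])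
  have hGpdegle : Gp.degree ≤ (((p-1) * (n/p) : ℕ) : WithBot ℕ) := by
    rw [hGpsum]; exact degree_sumXpow_le p (n/p)
  have hGqdegle : Gq.degree ≤ (((q-1) * (n/q) : ℕ) : WithBot ℕ) := by
    rw [hGqsum]; exact degree_sumXpow_le q (n/q)
  have hxGp : ∀ x : ℚ[X], x.degree < ((n/p : ℕ) : WithBot ℕ) →
      (x * Gp).degree < (n : WithBot ℕ) := by
    intro x hx
    have h := degree_mul_lt_helper hx hGpdegle
    rwa [nat_aux (n/p) p hp0, Nat.mul_div_cancel' hpdvd] at h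
  have hxGq : ∀ x : ℚ[X], x.degree < ((n/q : ℕ) : WithBot ℕ) →
      (x * Gq).degree < (n : WithBot ℕ) := by
    intro x hx
    have h := degree_mul_lt_helper hx hGqdegle
    rwa [nat_aux (n/q) q hq0, Nat.mul_div_cancel' hqdvd] at h
  have hPpdegle : Pp.degree ≤ (((q-1) * m : ℕ) : WithBot ℕ) := by
    rw [hPpsum]; exact degree_sumXpow_le q m
  have hQqdegle : Qq.degree ≤ (((p-1) * m : ℕ) : WithBot ℕ) := by
    rw [hQqsum]; exact degree_sumXpow_le p m
  have hxPp : ∀ c : ℚ[X], c.degree < (m : WithBot ℕ) →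
      (c * Pp).degree < ((n/p : ℕ) : WithBot ℕ) := by
    intro c hc
    have h := degree_mul_lt_helper hc hPpdegle
    rwa [nat_aux m q hq0, mul_comm q m, ← hnp_eq] at h
  have hxQq : ∀ c : ℚ[X], c.degree < (m : WithBot ℕ) →
      (c * Qq).degree < ((n/q : ℕ) : WithBot ℕ) := by
    intro c hc
    have h := degree_mul_lt_helper hc hQqdegle
    rwa [nat_aux m p hp0, mul_comm p m, ← hnq_eq] at h
  have coeff_rel : ∀ (c : ℚ[X]), c.degree < (m : WithBot ℕ) → ∀ l < q, ∀ s < m,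
      (c * Pp).coeff (l * m + s) = c.coeff s := by
    intro c hc l hl s hs
    rw [hPpsum]
    exact coeff_mul_sumXpow hc hl hs
  -- Bezout identity
  have key : ∃ u v : ℚ[X], u * Gp + v * Gq = cyclotomic n ℚ := by
    have hGpA : Gp = ∏ d ∈ n.divisors \ (n/p).divisors, cyclotomic d ℚ :=
      Gpoly_eq_prod_cyclotomic hnp0 hnpdvd hn0
    have hGqB : Gq = ∏ d ∈ n.divisors \ (n/q).divisors, cyclotomic d ℚ :=
      Gpoly_eq_prod_cyclotomic hnq0 hnqdvd hn0
    have hnA : n ∈ n.divisors \ (n/p).divisors := by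
      rw [Finset.mem_sdiff]
      refine ⟨Nat.mem_divisors_self n hn0.ne', ?_⟩
      intro hmem
      have := (Nat.mem_divisors.mp hmem).1
      exact absurd (Nat.le_of_dvd hnp0 this) (not_le.mpr (Nat.div_lt_self hn0 hp.one_lt))
    have hnB : n ∈ n.divisors \ (n/q).divisors := by
      rw [Finset.mem_sdiff]
      refine ⟨Nat.mem_divisors_self n hn0.ne', ?_⟩
      intro hmem
      have := (Nat.mem_divisors.mp hmem).1
      exact absurd (Nat.le_of_dvd hnq0 this) (not_le.mpr (Nat.div_lt_self hn0 hq.one_lt))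
    have hGpA' : Gp = cyclotomic n ℚ *
        ∏ d ∈ (n.divisors \ (n/p).divisors).erase n, cyclotomic d ℚ := by
      rw [hGpA]; exact (Finset.mul_prod_erase _ _ hnA).symm
    have hGqB' : Gq = cyclotomic n ℚ *
        ∏ d ∈ (n.divisors \ (n/q).divisors).erase n, cyclotomic d ℚ := by
      rw [hGqB]; exact (Finset.mul_prod_erase _ _ hnB).symm
    have hdisj : Disjoint ((n.divisors \ (n/p).divisors).erase n)
        ((n.divisors \ (n/q).divisors).erase n) := by
      rw [Finset.disjoint_left]
      intro d hd1 hd2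
      obtain ⟨hdn1, hd1'⟩ := Finset.mem_erase.mp hd1
      obtain ⟨_, hd2'⟩ := Finset.mem_erase.mp hd2
      rw [Finset.mem_sdiff] at hd1' hd2'
      apply hdn1
      refine eq_of_not_dvd_divs hp hq hpq' he₁ he₂ hn (Nat.mem_divisors.mp hd1'.1).1 ?_ ?_
      · exact fun hh => hd1'.2 (Nat.mem_divisors.mpr ⟨hh, hnp0.ne'⟩)
      · exact fun hh => hd2'.2 (Nat.mem_divisors.mpr ⟨hh, hnq0.ne'⟩)
    have hcop : IsCoprime (∏ d ∈ (n.divisors \ (n/p).divisors).erase n, cyclotomic d ℚ)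
        (∏ d ∈ (n.divisors \ (n/q).divisors).erase n, cyclotomic d ℚ) := by
      apply IsCoprime.prod_left
      intro d hd
      apply IsCoprime.prod_right
      intro e he
      refine cyclotomic.isCoprime_rat fun hde => ?_
      subst hde
      exact Finset.disjoint_left.mp hdisj hd he
    obtain ⟨u, v, huv⟩ := hcop
    exact ⟨u, v, by rw [hGpA', hGqB']; linear_combination (cyclotomic n ℚ) * huv⟩
  -- coprimality of Pp and Qq
  have hcopPQ : IsCoprime Pp Qq := by
    have hPpA : Pp = ∏ d ∈ (n/p).divisors \ m.divisors, cyclotomic d ℚ :=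
      Gpoly_eq_prod_cyclotomic hm0 hmnp hnp0
    have hQqB : Qq = ∏ d ∈ (n/q).divisors \ m.divisors, cyclotomic d ℚ :=
      Gpoly_eq_prod_cyclotomic hm0 hmnq hnq0
    rw [hPpA, hQqB]
    apply IsCoprime.prod_left
    intro d hd
    apply IsCoprime.prod_right
    intro e he
    refine cyclotomic.isCoprime_rat fun hde => ?_
    subst hde
    rw [Finset.mem_sdiff] at hd he
    have h1 : d ∣ m * q := hnp_eq ▸ (Nat.mem_divisors.mp hd.1).1
    have h2 : d ∣ m * p := hnq_eq ▸ (Nat.mem_divisors.mp he.1).1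
    have h3 : d ∣ m := by
      have hg := Nat.dvd_gcd h1 h2
      rwa [Nat.gcd_mul_left, Nat.Coprime.gcd_eq_one
        ((Nat.coprime_primes hq hp).mpr (Ne.symm hpq')), mul_one] at hg
    exact hd.2 (Nat.mem_divisors.mpr ⟨h3, hm0.ne'⟩)
  -- uniqueness core
  have main_uniq : ∀ a₁ b₁ a₂ b₂ : ℚ[X],
      a₁.degree < ((n/p : ℕ) : WithBot ℕ) → f = a₁ * Gp + b₁ * Gq → PUniformized n p q a₁ →
      a₂.degree < ((n/p : ℕ) : WithBot ℕ) → f = a₂ * Gp + b₂ * Gq → PUniformized n p q a₂ →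
      a₁ = a₂ ∧ b₁ = b₂ := by
    intro a₁ b₁ a₂ b₂ hd1 hf1 hu1 hd3 hf2 hu2
    have heq : (a₁ - a₂) * Gp = (b₂ - b₁) * Gq := by linear_combination hf2 - hf1
    have hdQ : (a₁ - a₂) * Qq = (b₂ - b₁) * Pp := by
      apply mul_right_cancel₀ hGq0
      calc (a₁ - a₂) * Qq * Gq = (a₁ - a₂) * (Qq * Gq) := by ring
        _ = (a₁ - a₂) * (Pp * Gp) := by rw [hPGQG]
        _ = ((a₁ - a₂) * Gp) * Pp := by ring
        _ = ((b₂ - b₁) * Gq) * Pp := by rw [heq]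
        _ = (b₂ - b₁) * Pp * Gq := by ring
    have hPpdvd : Pp ∣ (a₁ - a₂) :=
      hcopPQ.dvd_of_dvd_mul_right ⟨b₂ - b₁, by linear_combination hdQ⟩
    obtain ⟨c, hc⟩ := hPpdvd
    have hc0 : c = 0 := by
      by_contra hc0
      have hd0 : a₁ - a₂ ≠ 0 := by rw [hc]; exact mul_ne_zero hPp0 hc0
      have hdegd : (a₁ - a₂).degree < ((n/p : ℕ) : WithBot ℕ) :=
        lt_of_le_of_lt (degree_sub_le _ _) (max_lt hd1 hd3)
      have hnd : (a₁ - a₂).natDegree < n/p := (natDegree_lt_iff_degree_lt hd0).mpr hdegd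
      have hndm : (a₁ - a₂).natDegree = Pp.natDegree + c.natDegree := by
        rw [hc, natDegree_mul hPp0 hc0]
      have hPnd : (q-1) * m ≤ Pp.natDegree := by
        apply le_natDegree_of_ne_zero
        rw [hPpsum, coeff_sumXpow q m (q-1) hm0, if_pos (by omega)]
        norm_num
      have harith : (q-1) * m + m = n / p := by
        have h := nat_aux m q hq0
        rw [mul_comm q m] at h
        rw [hnp_eq]
        omega
      have hcnd : c.natDegree < m := by omega
      have hcdeg : c.degree < (m : WithBot ℕ) := (natDegree_lt_iff_degree_lt hc0).mp hcnd
      apply hc0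
      ext j
      rw [coeff_zero]
      by_cases hj : j < m
      · have hrel : ∀ l < q, a₁.coeff (l * m + j) = a₂.coeff (l * m + j) + c.coeff j := by
          intro l hl
          have h1 := coeff_rel c hcdeg l hl j hj
          have h2 : (a₁ - a₂).coeff (l*m+j) = c.coeff j := by
            rw [hc, mul_comm]; exact h1
          rw [coeff_sub] at h2
          linarith
        obtain ⟨hu1s, hu1b⟩ := hu1 j (by rw [hmpq]; exact hj)
        obtain ⟨hu2s, hu2b⟩ := hu2 j (by rw [hmpq]; exact hj)
        rw [hmpq] at hu1s hu1b hu2s hu2b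
        obtain ⟨l₁, hl₁, hz₁⟩ := hu1s
        obtain ⟨l₂, hl₂, hz₂⟩ := hu2s
        have e1 := hrel l₁ hl₁
        have e2 := hrel l₂ hl₂
        have hb1 := hu2b l₁ hl₁
        have hb2 := hu1b l₂ hl₂
        linarith
      · exact coeff_eq_zero_of_degree_lt
          (lt_of_lt_of_le hcdeg (by exact_mod_cast Nat.le_of_not_lt hj))
    have ha : a₁ = a₂ := by
      have h := hc
      rw [hc0, mul_zero] at h
      exact sub_eq_zero.mp h
    refine ⟨ha, ?_⟩
    have h0 : (b₂ - b₁) * Gq = 0 := by rw [← heq, ha, sub_self, zero_mul]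
    have h1 := (mul_eq_zero.mp h0).resolve_right hGq0
    exact (sub_eq_zero.mp h1).symm
  -- existence: base solution
  obtain ⟨g, hg⟩ := hdvd
  obtain ⟨u, v, huv⟩ := key
  have hMpmonic : ((X : ℚ[X]) ^ (n/p) - 1).Monic := by
    simpa using monic_X_pow_sub_C (1 : ℚ) hnp0.ne'
  have hMqmonic : ((X : ℚ[X]) ^ (n/q) - 1).Monic := by
    simpa using monic_X_pow_sub_C (1 : ℚ) hnq0.ne'
  have hMpdeg : ((X : ℚ[X]) ^ (n/p) - 1).degree = ((n/p : ℕ) : WithBot ℕ) := by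
    simpa using degree_X_pow_sub_C hnp0 (1 : ℚ)
  have hMqdeg : ((X : ℚ[X]) ^ (n/q) - 1).degree = ((n/q : ℕ) : WithBot ℕ) := by
    simpa using degree_X_pow_sub_C hnq0 (1 : ℚ)
  have hXndeg : ((X : ℚ[X]) ^ n - 1).degree = (n : WithBot ℕ) := by
    simpa using degree_X_pow_sub_C hn0 (1 : ℚ)
  set Mp := (X : ℚ[X]) ^ (n/p) - 1 with hMp_def
  set Mq := (X : ℚ[X]) ^ (n/q) - 1 with hMq_def
  set a := (g * u) %ₘ Mp with ha_def
  set t := (g * u) /ₘ Mp with ht_def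
  have e1 : a + Mp * t = g * u := modByMonic_add_div _ Mp
  set b := (g * v + t * Mq) %ₘ Mq with hb_def
  set s0 := (g * v + t * Mq) /ₘ Mq with hs0_def
  have e2 : b + Mq * s0 = g * v + t * Mq := modByMonic_add_div _ Mq
  have hdega : a.degree < ((n/p : ℕ) : WithBot ℕ) := by
    have h := degree_modByMonic_lt (g*u) hMpmonic
    rwa [hMpdeg] at h
  have hdegb : b.degree < ((n/q : ℕ) : WithBot ℕ) := by
    have h := degree_modByMonic_lt (g * v + t * Mq) hMqmonic
    rwa [hMqdeg] at h
  have hstep : f = a * Gp + b * Gq + s0 * ((X : ℚ[X]) ^ n - 1) := by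
    have hf1 : f = (g*u) * Gp + (g*v) * Gq := by
      rw [hg]; linear_combination (-g) * huv
    linear_combination hf1 - Gp * e1 - Gq * e2 + t * hMpGp - t * hMqGq + s0 * hMqGq
  have hs00 : s0 = 0 := by
    by_contra hs0ne
    have hfd : (f - a * Gp - b * Gq).degree < (n : WithBot ℕ) :=
      lt_of_le_of_lt (degree_sub_le _ _)
        (max_lt (lt_of_le_of_lt (degree_sub_le _ _) (max_lt hdeg (hxGp a hdega)))
          (hxGq b hdegb))
    have heqs : s0 * ((X : ℚ[X]) ^ n - 1) = f - a * Gp - b * Gq := by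
      linear_combination -hstep
    have hdm : (s0 * ((X : ℚ[X]) ^ n - 1)).degree = ((s0.natDegree + n : ℕ) : WithBot ℕ) := by
      rw [degree_mul, degree_eq_natDegree hs0ne, hXndeg]
      push_cast
      rfl
    rw [heqs] at hdm
    rw [hdm] at hfd
    have : s0.natDegree + n < n := by exact_mod_cast hfd
    omega
  have hfab : f = a * Gp + b * Gq := by rw [hstep, hs00]; ring
  -- uniformization
  have hqne : (Finset.range q).Nonempty := ⟨0, Finset.mem_range.mpr hq0⟩
  set μ : ℕ → ℚ := fun s => (Finset.range q).inf' hqne (fun l => a.coeff (l * m + s)) with hμ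
  set c := ∑ s ∈ Finset.range m, C (-(μ s)) * X ^ s with hc_def
  have hccoeff : ∀ j, c.coeff j = if j < m then -(μ j) else 0 := fun j => coeff_sumC m _ j
  have hcdeg : c.degree < (m : WithBot ℕ) := by
    rw [degree_lt_iff_coeff_zero]
    intro j hj
    rw [hccoeff j, if_neg (by omega)]
  have hA'deg : (a + c * Pp).degree < ((n/p : ℕ) : WithBot ℕ) :=
    lt_of_le_of_lt (degree_add_le _ _) (max_lt hdega (hxPp c hcdeg))
  have hB'deg : (b - c * Qq).degree < ((n/q : ℕ) : WithBot ℕ) :=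
    lt_of_le_of_lt (degree_sub_le _ _) (max_lt hdegb (hxQq c hcdeg))
  have hA'eq : f = (a + c * Pp) * Gp + (b - c * Qq) * Gq := by
    linear_combination hfab - c * hPGQG
  have hA'uni : PUniformized n p q (a + c * Pp) := by
    unfold PUniformized
    rw [hmpq]
    intro s hs
    have hacoeff : ∀ l < q, (a + c * Pp).coeff (l * m + s) = a.coeff (l * m + s) - μ s := by
      intro l hl
      rw [coeff_add, coeff_rel c hcdeg l hl s hs, hccoeff s, if_pos hs]
      ring
    constructor
    · obtain ⟨l, hl, hle⟩ := Finset.exists_mem_eq_inf' hqne (fun l => a.coeff (l * m + s))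
      rw [Finset.mem_range] at hl
      refine ⟨l, hl, ?_⟩
      rw [hacoeff l hl]
      have hμs : μ s = a.coeff (l * m + s) := hle
      rw [hμs]
      ring
    · intro l hl
      rw [hacoeff l hl]
      have hle : μ s ≤ a.coeff (l * m + s) :=
        Finset.inf'_le _ (Finset.mem_range.mpr hl)
      linarith
  refine ⟨(a + c * Pp, b - c * Qq), ⟨hA'deg, hB'deg, hA'eq, hA'uni⟩, ?_⟩
  rintro ⟨a₁, b₁⟩ ⟨h1, h2, h3, h4⟩
  obtain ⟨hEa, hEb⟩ := main_uniq a₁ b₁ (a + c * Pp) (b - c * Qq) h1 h3 h4 hA'deg hA'eq hA'uni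
  simp only [Prod.mk.injEq]
  exact ⟨hEa, hEb⟩
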